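/- arXiv:1410.2989 — 8 statements merged into one kernel-verified Lean document; each statement's English description precedes it below -/
import Mathlib

section
/- Let A, B ∈ ℝ^{n×n} be symmetric matrices and suppose the block matrix [[A, B], [B, −A]] has the spectral decomposition [[A, B], [B, −A]] = U · diag(Θ, −Θ) · Uᵀ, where U ∈ ℝ^{2n×2n} is orthogonal and Θ = diag(θ₁, θ₂, …, θ_n) with θ₁ ≥ θ₂ ≥ … ≥ θ_n ≥ 0. If for every j ∈ {1, …, n} the columns of U satisfy u_{n+j} = [[0, −I_n], [I_n, 0]] · u_j (where u_k denotes the k-th column of U), then [[B, −A], [−A, −B]] = U · [[0, −Θ], [−Θ, 0]] · Uᵀ. -/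
open Matrix

/-- Property of two Hamiltonian systems: if `[[A, B], [B, −A]] = U · diag(Θ, −Θ) · Uᵀ` is a
spectral decomposition with `U` orthogonal, `Θ = diag(θ₁ ≥ … ≥ θ_n ≥ 0)`, and the columns of `U`
satisfy `u_{n+j} = [[0, −I], [I, 0]] u_j`, then
`[[B, −A], [−A, −B]] = U · [[0, −Θ], [−Θ, 0]] · Uᵀ`. -/
theorem stmt2 {n : ℕ} (A B : Matrix (Fin n) (Fin n) ℝ)
    (hA : A.IsSymm) (hB : B.IsSymm)
    (U : Matrix (Fin n ⊕ Fin n) (Fin n ⊕ Fin n) ℝ)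
    (hU : Uᵀ * U = 1) (hU' : U * Uᵀ = 1)
    (θ : Fin n → ℝ) (hmono : Antitone θ) (hnonneg : ∀ i, 0 ≤ θ i)
    (hspec : Matrix.fromBlocks A B B (-A) =
      U * Matrix.fromBlocks (Matrix.diagonal θ) 0 0 (-(Matrix.diagonal θ)) * Uᵀ)
    (hcol : ∀ j : Fin n, (fun i => U i (Sum.inr j)) =
      (Matrix.fromBlocks (0 : Matrix (Fin n) (Fin n) ℝ) (-1) 1 0).mulVec
        (fun i => U i (Sum.inl j))) :
    Matrix.fromBlocks B (-A) (-A) (-B) =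
      U * Matrix.fromBlocks 0 (-(Matrix.diagonal θ)) (-(Matrix.diagonal θ)) 0 * Uᵀ := by
  set S : Matrix (Fin n ⊕ Fin n) (Fin n ⊕ Fin n) ℝ :=
    Matrix.fromBlocks 0 (-1) 1 0 with hS
  have hcolS : ∀ j i, U i (Sum.inr j) = ∑ l, S i l * U l (Sum.inl j) := by
    intro j i
    have := congrFun (hcol j) i
    simpa [Matrix.mulVec, dotProduct] using this
  have hcomm : S * U = U * S := by
    ext i k
    rcases k with j | j
    · rw [Matrix.mul_apply, Matrix.mul_apply, ← hcolS j i]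
      simp [hS, Fintype.sum_sum_type, Matrix.one_apply, mul_ite, Finset.sum_ite_eq']
    · rw [Matrix.mul_apply, Matrix.mul_apply]
      have hL : ∀ l, S i l * U l (Sum.inr j) = ∑ m, S i l * (S l m * U m (Sum.inl j)) := by
        intro l
        rw [hcolS j l, Finset.mul_sum]
      rw [Finset.sum_congr rfl fun l _ => hL l, Finset.sum_comm]
      have hSS : ∀ m, ∑ l, S i l * S l m = (-1 : Matrix (Fin n ⊕ Fin n) (Fin n ⊕ Fin n) ℝ) i m := by
        intro m
        have : (S * S) i m = (-1 : Matrix (Fin n ⊕ Fin n) (Fin n ⊕ Fin n) ℝ) i m := by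
          rw [show S * S = (-1 : Matrix (Fin n ⊕ Fin n) (Fin n ⊕ Fin n) ℝ) by
            rw [hS, Matrix.fromBlocks_multiply, ← neg_neg (1 : Matrix (Fin n ⊕ Fin n) (Fin n ⊕ Fin n) ℝ),
              ← Matrix.fromBlocks_one, Matrix.fromBlocks_neg]
            simp]
        rw [← this, Matrix.mul_apply]
      calc ∑ m, ∑ l, S i l * (S l m * U m (Sum.inl j))
          = ∑ m, (∑ l, S i l * S l m) * U m (Sum.inl j) := by
            simp only [Finset.sum_mul, mul_assoc]
        _ = ∑ m, (-1 : Matrix (Fin n ⊕ Fin n) (Fin n ⊕ Fin n) ℝ) i m * U m (Sum.inl j) := by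
            simp only [hSS]
        _ = -U i (Sum.inl j) := by
            simp [Matrix.neg_apply, Matrix.one_apply, ite_mul, Finset.sum_ite_eq]
        _ = ∑ l, U i l * S l (Sum.inr j) := by
            simp [hS, Fintype.sum_sum_type, Matrix.one_apply, mul_ite, Finset.sum_ite_eq']
  have hJ : S = U * S * Uᵀ := by
    rw [← hcomm, Matrix.mul_assoc, hU', Matrix.mul_one]
  have key : Matrix.fromBlocks B (-A) (-A) (-B) = Matrix.fromBlocks A B B (-A) * S := by
    simp [hS, Matrix.fromBlocks_multiply]
  rw [key, hspec, hJ]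
  rw [show U * Matrix.fromBlocks (Matrix.diagonal θ) 0 0 (-(Matrix.diagonal θ)) * Uᵀ * (U * S * Uᵀ)
      = U * (Matrix.fromBlocks (Matrix.diagonal θ) 0 0 (-(Matrix.diagonal θ)) * (Uᵀ * U) * S) * Uᵀ by
    noncomm_ring]
  rw [hU, Matrix.mul_one]
  congr 2
  rw [hS, Matrix.fromBlocks_multiply]
  simp only [Matrix.mul_zero, Matrix.zero_mul, Matrix.mul_one, Matrix.mul_neg, Matrix.mul_one,
    add_zero, zero_add, Matrix.neg_mul, Matrix.one_mul, neg_zero]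
end

section
/- Let z₁, z₂ ∈ ℂ^n with Z = [z₁, z₂] satisfying Z*Z = I₂, and set X̃ = Re(Z), Ỹ = Im(Z) ∈ ℝ^{n×2} and G = [Ỹ, X̃] ∈ ℝ^{n×4}. Suppose φ_m, φ_M ≥ 0 and p₁, p₂, q₁, q₂ ∈ ℝ² are such that GᵀG·(p₁ᵀ, q₁ᵀ)ᵀ = φ_m²·(p₁ᵀ, q₁ᵀ)ᵀ, GᵀG·(p₂ᵀ, q₂ᵀ)ᵀ = φ_M²·(p₂ᵀ, q₂ᵀ)ᵀ, and the four vectors (p₁ᵀ, q₁ᵀ)ᵀ, (p₂ᵀ, q₂ᵀ)ᵀ, (−q₁ᵀ, p₁ᵀ)ᵀ, (−q₂ᵀ, p₂ᵀ)ᵀ form an orthonormal basis of ℝ⁴. Define φ₁ = 1 − 2φ_m², φ₂ = 1 − 2φ_M², and Ω = [[p₁, p₂, −q₁, −q₂], [q₁, q₂, p₁, p₂]] ∈ ℝ^{4×4} (the orthogonal matrix whose columns are the four vectors above). Then [[X̃ᵀX̃ − ỸᵀỸ, −(X̃ᵀỸ + ỸᵀX̃)], [−(X̃ᵀỸ + ỸᵀX̃),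 ỸᵀỸ − X̃ᵀX̃]] = Ω · diag(φ₁, φ₂, −φ₁, −φ₂) · Ωᵀ, and [[X̃ᵀỸ + ỸᵀX̃, X̃ᵀX̃ − ỸᵀỸ], [X̃ᵀX̃ − ỸᵀỸ, −(X̃ᵀỸ + ỸᵀX̃)]] = Ω · [[0, Φ], [Φ, 0]] · Ωᵀ, where Φ = diag(φ₁, φ₂). -/
open Matrix

/-- Spectral decompositions of the two symmetric Hamiltonian matrices built from
`X̃ = Re(Z)`, `Ỹ = Im(Z)` (with `Z*Z = I₂`), in terms of the singular value data of
`G = [Ỹ, X̃]`: with `φ₁ = 1 − 2φ_m²`, `φ₂ = 1 − 2φ_M²`, `Φ = diag(φ₁, φ₂)` and the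
orthogonal matrix `Ω = [[p₁, p₂, −q₁, −q₂], [q₁, q₂, p₁, p₂]]`, one has
`[[X̃ᵀX̃ − ỸᵀỸ, −(X̃ᵀỸ + ỸᵀX̃)], [−(X̃ᵀỸ + ỸᵀX̃), ỸᵀỸ − X̃ᵀX̃]] = Ω diag(φ₁, φ₂, −φ₁, −φ₂) Ωᵀ`
and
`[[X̃ᵀỸ + ỸᵀX̃, X̃ᵀX̃ − ỸᵀỸ], [X̃ᵀX̃ − ỸᵀỸ, −(X̃ᵀỸ + ỸᵀX̃)]] = Ω [[0, Φ], [Φ, 0]] Ωᵀ`. -/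
theorem stmt5 {n : ℕ} (Z : Matrix (Fin n) (Fin 2) ℂ) (hZ : Zᴴ * Z = 1)
    (X Y : Matrix (Fin n) (Fin 2) ℝ)
    (hX : X = Z.map Complex.re) (hY : Y = Z.map Complex.im)
    (G : Matrix (Fin n) (Fin 2 ⊕ Fin 2) ℝ) (hG : G = Matrix.fromCols Y X)
    (φm φM : ℝ) (hφm : 0 ≤ φm) (hφM : 0 ≤ φM)
    (p₁ p₂ q₁ q₂ : Fin 2 → ℝ)
    (heig₁ : (Gᵀ * G).mulVec (Sum.elim p₁ q₁) = (φm ^ 2) • Sum.elim p₁ q₁)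
    (heig₂ : (Gᵀ * G).mulVec (Sum.elim p₂ q₂) = (φM ^ 2) • Sum.elim p₂ q₂)
    (P Q : Matrix (Fin 2) (Fin 2) ℝ)
    (hP : P = Matrix.of fun i k => if k = (0 : Fin 2) then p₁ i else p₂ i)
    (hQ : Q = Matrix.of fun i k => if k = (0 : Fin 2) then q₁ i else q₂ i)
    (Ω : Matrix (Fin 2 ⊕ Fin 2) (Fin 2 ⊕ Fin 2) ℝ)
    (hΩ : Ω = Matrix.fromBlocks P (-Q) Q P)
    (hortho : Ωᵀ * Ω = 1)
    (Φ : Matrix (Fin 2) (Fin 2) ℝ)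
    (hΦ : Φ = Matrix.diagonal ![1 - 2 * φm ^ 2, 1 - 2 * φM ^ 2]) :
    Matrix.fromBlocks (Xᵀ * X - Yᵀ * Y) (-(Xᵀ * Y + Yᵀ * X))
        (-(Xᵀ * Y + Yᵀ * X)) (Yᵀ * Y - Xᵀ * X) =
      Ω * Matrix.fromBlocks Φ 0 0 (-Φ) * Ωᵀ ∧
    Matrix.fromBlocks (Xᵀ * Y + Yᵀ * X) (Xᵀ * X - Yᵀ * Y)
        (Xᵀ * X - Yᵀ * Y) (-(Xᵀ * Y + Yᵀ * X)) =
      Ω * Matrix.fromBlocks 0 Φ Φ 0 * Ωᵀ := by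
  -- real identities from Z*Z = 1
  have h1 : Xᵀ * X + Yᵀ * Y = 1 := by
    ext i j
    have h := congrFun (congrFun hZ i) j
    have hre := congrArg Complex.re h
    simp only [Matrix.mul_apply, Matrix.one_apply, Complex.re_sum, Complex.mul_re,
      apply_ite Complex.re, Complex.one_re, Complex.zero_re,
      Matrix.conjTranspose_apply, RCLike.star_def, Complex.conj_re, Complex.conj_im] at hre
    simp only [Matrix.add_apply, Matrix.mul_apply, Matrix.one_apply, hX, hY, Matrix.map_apply,
      Matrix.transpose_apply, ← Finset.sum_add_distrib]
    rw [← hre]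
    congr 1; ext k; ring
  have h2 : Xᵀ * Y = Yᵀ * X := by
    ext i j
    have h := congrFun (congrFun hZ i) j
    have him := congrArg Complex.im h
    simp only [Matrix.mul_apply, Matrix.one_apply, Complex.im_sum, Complex.mul_im,
      apply_ite Complex.im, Complex.one_im, Complex.zero_im, Matrix.conjTranspose_apply,
      RCLike.star_def, Complex.conj_re, Complex.conj_im, ite_self] at him
    simp only [Matrix.mul_apply, hX, hY, Matrix.map_apply, Matrix.transpose_apply]
    have h2' : ∑ k, (Z k i).re * (Z k j).im - ∑ k, (Z k i).im * (Z k j).re = 0 := by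
      rw [← Finset.sum_sub_distrib, ← him]
      congr 1; ext k; ring
    linarith [h2']
  have hXX : Xᵀ * X = 1 - Yᵀ * Y := eq_sub_of_add_eq h1
  have hYY : Yᵀ * Y = 1 - Xᵀ * X := eq_sub_of_add_eq (by rw [add_comm]; exact h1)
  have hGG : Gᵀ * G = Matrix.fromBlocks (Yᵀ * Y) (Yᵀ * X) (Xᵀ * Y) (Xᵀ * X) := by
    rw [hG, transpose_fromCols, fromRows_mul_fromCols]
  have split : ∀ (p q : Fin 2 → ℝ) (c : ℝ),
      (Gᵀ * G).mulVec (Sum.elim p q) = c • Sum.elim p q →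
      ((Yᵀ * Y).mulVec p + (Yᵀ * X).mulVec q = c • p) ∧
      ((Xᵀ * Y).mulVec p + (Xᵀ * X).mulVec q = c • q) := by
    intro p q c h
    rw [hGG, fromBlocks_mulVec] at h
    constructor
    · funext j; have := congrFun h (Sum.inl j); simpa only [Sum.elim_inl, Pi.smul_apply, Sum.elim_comp_inl, Sum.elim_comp_inr] using this
    · funext j; have := congrFun h (Sum.inr j); simpa only [Sum.elim_inr, Pi.smul_apply, Sum.elim_comp_inl, Sum.elim_comp_inr] using this
  set A := Xᵀ * X - Yᵀ * Y with hA
  set B := Xᵀ * Y + Yᵀ * X with hB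
  have main : ∀ (p q : Fin 2 → ℝ) (c : ℝ),
      (Gᵀ * G).mulVec (Sum.elim p q) = c • Sum.elim p q →
      (A.mulVec p - B.mulVec q = (1 - 2 * c) • p) ∧
      (B.mulVec p + A.mulVec q = -((1 - 2 * c) • q)) := by
    intro p q c h
    obtain ⟨e1, e2⟩ := split p q c h
    constructor
    · have key : A.mulVec p - B.mulVec q
          = p - (2 : ℝ) • ((Yᵀ * Y).mulVec p + (Yᵀ * X).mulVec q) := by
        rw [hA, hB, hXX, h2]
        funext i
        simp [Matrix.sub_mulVec, Matrix.add_mulVec, Matrix.one_mulVec]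
        fin_cases i <;> simp [vecHead, vecTail] <;> ring
      rw [key, e1]
      funext i; simp; ring
    · have key : B.mulVec p + A.mulVec q
          = (2 : ℝ) • ((Xᵀ * Y).mulVec p + (Xᵀ * X).mulVec q) - q := by
        rw [hA, hB, hYY, h2]
        funext i
        simp [Matrix.sub_mulVec, Matrix.add_mulVec, Matrix.one_mulVec]
        fin_cases i <;> simp [vecHead, vecTail] <;> ring
      rw [key, e2]
      funext i; simp; ring
  obtain ⟨hA1, hB1⟩ := main p₁ q₁ (φm ^ 2) heig₁
  obtain ⟨hA2, hB2⟩ := main p₂ q₂ (φM ^ 2) heig₂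
  have hPA : A * P - B * Q = P * Φ := by
    ext i k
    have c1 := congrFun hA1 i
    have c2 := congrFun hA2 i
    simp only [Matrix.mulVec, dotProduct, Fin.sum_univ_two, Pi.sub_apply, Pi.add_apply,
      Pi.neg_apply, Pi.smul_apply, smul_eq_mul] at c1 c2
    fin_cases k <;>
      simp [hP, hQ, hΦ, Matrix.mul_apply, Matrix.diagonal, Fin.sum_univ_two] <;>
      linarith [c1, c2]
  have hQB : B * P + A * Q = -(Q * Φ) := by
    ext i k
    have c1 := congrFun hB1 i
    have c2 := congrFun hB2 i
    simp only [Matrix.mulVec, dotProduct, Fin.sum_univ_two, Pi.sub_apply, Pi.add_apply,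
      Pi.neg_apply, Pi.smul_apply, smul_eq_mul] at c1 c2
    fin_cases k <;>
      simp [hP, hQ, hΦ, Matrix.mul_apply, Matrix.diagonal, Fin.sum_univ_two] <;>
      linarith [c1, c2]
  have hΩΩ : Ω * Ωᵀ = 1 := mul_eq_one_comm.mp hortho
  have hYX : Yᵀ * Y - Xᵀ * X = -A := by rw [hA]; exact (neg_sub _ _).symm
  have hQΦ : Q * Φ = -(B * P + A * Q) := by rw [hQB, neg_neg]
  constructor
  · have hMΩ : Matrix.fromBlocks A (-B) (-B) (-A) * Ω
        = Ω * Matrix.fromBlocks Φ 0 0 (-Φ) := by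
      rw [hΩ, Matrix.fromBlocks_multiply, Matrix.fromBlocks_multiply,
        Matrix.fromBlocks_inj]
      refine ⟨?_, ?_, ?_, ?_⟩ <;>
        simp only [Matrix.mul_zero, Matrix.mul_neg, Matrix.neg_mul, add_zero, zero_add,
          neg_neg] <;>
        first
          | (rw [← hPA]; abel)
          | (rw [hQΦ]; abel)
    calc Matrix.fromBlocks A (-B) (-B) (Yᵀ * Y - Xᵀ * X)
        = Matrix.fromBlocks A (-B) (-B) (-A) * (Ω * Ωᵀ) := by
          rw [hΩΩ, Matrix.mul_one, hYX]
      _ = (Matrix.fromBlocks A (-B) (-B) (-A) * Ω) * Ωᵀ := by rw [Matrix.mul_assoc]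
      _ = Ω * Matrix.fromBlocks Φ 0 0 (-Φ) * Ωᵀ := by rw [hMΩ]
  · have hNΩ : Matrix.fromBlocks B A A (-B) * Ω
        = Ω * Matrix.fromBlocks 0 Φ Φ 0 := by
      rw [hΩ, Matrix.fromBlocks_multiply, Matrix.fromBlocks_multiply,
        Matrix.fromBlocks_inj]
      refine ⟨?_, ?_, ?_, ?_⟩ <;>
        simp only [Matrix.mul_zero, Matrix.mul_neg, Matrix.neg_mul, add_zero, zero_add,
          neg_neg] <;>
        first
          | (rw [← hPA]; abel)
          | (rw [hQΦ]; abel)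
    calc Matrix.fromBlocks B A A (-B)
        = Matrix.fromBlocks B A A (-B) * (Ω * Ωᵀ) := by rw [hΩΩ, Matrix.mul_one]
      _ = (Matrix.fromBlocks B A A (-B) * Ω) * Ωᵀ := by rw [Matrix.mul_assoc]
      _ = Ω * Matrix.fromBlocks 0 Φ Φ 0 * Ωᵀ := by rw [hNΩ]
end

section
/- Let S₁ ∈ ℂ^{n×r} and S₂ ∈ ℂ^{j×r} satisfy S₁*S₁ + S₂*S₂ = I_r. Let σ₁ > 0 be the largest singular value of S₁ and let v ∈ ℂ^r be a unit vector with S₁*S₁v = σ₁²v. Set z = S₁v/σ₁ ∈ ℂ^n (so ‖z‖₂ = 1) and w = S₂v/σ₁ ∈ ℂ^j. Assume Re(z) and Im(z) are linearly independent over ℝ, and let (c, s) be the Jacobi rotation parameters for the pair (Re(z), Im(z)). Define x₁ = c·Re(z) − s·Im(z), x₂ = s·Re(z) + c·Im(z), v₁ = c·Re(w) − s·Im(w), v₂ = s·Re(w) + c·Im(w), and let δ₁ = 1/‖x₁‖₂, δ₂ = 1/‖x₂‖₂, δ = δ₂/δ₁. Then x₁ᵀx₂ = 0, and for every β ∈ ℝ: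 δ₁²‖v₁‖₂² + δ₂²‖v₂‖₂² + β²(δ − 1/δ)² ≤ (1/min{‖x₁‖₂², ‖x₂‖₂²}) · ((1 − σ₁²)/σ₁² + β²). -/
open Matrix

/-- The Jacobi rotation parameter `t` for a pair of real vectors `x, y` (used when `xᵀy ≠ 0`):
`τ = (‖y‖² − ‖x‖²)/(2 xᵀy)`, `t = 1/(τ + √(1+τ²))` if `τ ≥ 0`,
`t = −1/(−τ + √(1+τ²))` if `τ < 0`. -/
noncomputable def jacobiT {n : ℕ} (x y : Fin n → ℝ) : ℝ :=
  let τ : ℝ := (y ⬝ᵥ y - x ⬝ᵥ x) / (2 * (x ⬝ᵥ y))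
  if 0 ≤ τ then 1 / (τ + Real.sqrt (1 + τ ^ 2)) else -1 / (-τ + Real.sqrt (1 + τ ^ 2))

/-- The Jacobi rotation cosine: `c = 1` if `xᵀy = 0`, otherwise `c = 1/√(1+t²)`. -/
noncomputable def jacobiC {n : ℕ} (x y : Fin n → ℝ) : ℝ :=
  if x ⬝ᵥ y = 0 then 1 else 1 / Real.sqrt (1 + (jacobiT x y) ^ 2)

/-- The Jacobi rotation sine: `s = 0` if `xᵀy = 0`, otherwise `s = t·c`. -/
noncomputable def jacobiS {n : ℕ} (x y : Fin n → ℝ) : ℝ :=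
  if x ⬝ᵥ y = 0 then 0 else jacobiT x y * jacobiC x y

lemma dps_nonneg {m : ℕ} (x : Fin m → ℝ) : 0 ≤ x ⬝ᵥ x :=
  Finset.sum_nonneg fun _ _ => mul_self_nonneg _

lemma rot_norm {m : ℕ} (c s : ℝ) (h : c ^ 2 + s ^ 2 = 1) (p q : Fin m → ℝ) :
    (c • p - s • q) ⬝ᵥ (c • p - s • q) + (s • p + c • q) ⬝ᵥ (s • p + c • q)
      = p ⬝ᵥ p + q ⬝ᵥ q := by
  simp only [sub_dotProduct, dotProduct_sub, add_dotProduct, dotProduct_add,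
    smul_dotProduct, dotProduct_smul, smul_eq_mul]
  rw [dotProduct_comm q p]
  linear_combination (p ⬝ᵥ p + q ⬝ᵥ q) * h

lemma jacobiT_quad {m : ℕ} (x y : Fin m → ℝ) :
    (jacobiT x y) ^ 2 + 2 * ((y ⬝ᵥ y - x ⬝ᵥ x) / (2 * (x ⬝ᵥ y))) * jacobiT x y - 1 = 0 := by
  set τ : ℝ := (y ⬝ᵥ y - x ⬝ᵥ x) / (2 * (x ⬝ᵥ y)) with hτ
  have hS : Real.sqrt (1 + τ ^ 2) ^ 2 = 1 + τ ^ 2 := Real.sq_sqrt (by positivity)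
  have hSpos : 0 < Real.sqrt (1 + τ ^ 2) := Real.sqrt_pos.2 (by positivity)
  rw [jacobiT]
  simp only [← hτ]
  split_ifs with h
  · have hd : 0 < τ + Real.sqrt (1 + τ ^ 2) := by positivity
    field_simp
    nlinarith [hS]
  · push_neg at h
    have hd : 0 < -τ + Real.sqrt (1 + τ ^ 2) := by nlinarith
    field_simp
    nlinarith [hS]

lemma jacobiCS_sq {m : ℕ} (x y : Fin m → ℝ) :
    (jacobiC x y) ^ 2 + (jacobiS x y) ^ 2 = 1 := by
  by_cases h : x ⬝ᵥ y = 0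
  · simp [jacobiC, jacobiS, h]
  · simp only [jacobiC, jacobiS, if_neg h]
    set t := jacobiT x y
    have h1 : (0:ℝ) < 1 + t ^ 2 := by positivity
    have hS : Real.sqrt (1 + t ^ 2) ^ 2 = 1 + t ^ 2 := Real.sq_sqrt h1.le
    have hSpos : 0 < Real.sqrt (1 + t ^ 2) := Real.sqrt_pos.2 h1
    field_simp
    linarith [hS]

lemma jacobi_orth {m : ℕ} (x y : Fin m → ℝ) :
    (jacobiC x y • x - jacobiS x y • y) ⬝ᵥ (jacobiS x y • x + jacobiC x y • y) = 0 := by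
  simp only [sub_dotProduct, add_dotProduct, dotProduct_add,
    smul_dotProduct, dotProduct_smul, smul_eq_mul]
  rw [dotProduct_comm y x]
  by_cases h : x ⬝ᵥ y = 0
  · simp [jacobiC, jacobiS, h]
  · have hq := jacobiT_quad x y
    simp only [jacobiC, jacobiS, if_neg h]
    set t := jacobiT x y
    have h1 : (0:ℝ) < 1 + t ^ 2 := by positivity
    have hγ : (2 * (x ⬝ᵥ y)) ≠ 0 := by simpa using h
    have hq' : t ^ 2 * (x ⬝ᵥ y) + (y ⬝ᵥ y - x ⬝ᵥ x) * t - (x ⬝ᵥ y) = 0 := by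
      field_simp at hq
      linarith [hq]
    linear_combination (-1 / (Real.sqrt (1 + t ^ 2)) ^ 2) * hq'

lemma half_ineq (a b W v1 v2 β : ℝ) (ha : 0 < a) (hb : 0 < b) (hab : a + b = 1)
    (hle : a ≤ b) (hv1 : 0 ≤ v1) (hv2 : 0 ≤ v2) (hW : v1 + v2 = W) :
    v1 / a + v2 / b + β ^ 2 * ((a - b) ^ 2 / (a * b)) ≤ (1 / a) * (W + β ^ 2) := by
  have h1 : v2 / b ≤ v2 / a := div_le_div_of_nonneg_left hv2 ha hle
  have h2 : (a - b) ^ 2 / (a * b) ≤ 1 / a := by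
    have hb' : (a - b) ^ 2 ≤ b := by
      nlinarith [mul_nonneg ha.le (show (0:ℝ) ≤ 3 - 4 * a by linarith)]
    rw [div_le_div_iff₀ (by positivity) ha]
    nlinarith [mul_le_mul_of_nonneg_left hb' ha.le]
  have h3 : β ^ 2 * ((a - b) ^ 2 / (a * b)) ≤ β ^ 2 * (1 / a) :=
    mul_le_mul_of_nonneg_left h2 (sq_nonneg β)
  have h4 : v1 / a + v2 / a + β ^ 2 * (1 / a) = (1 / a) * (W + β ^ 2) := by
    field_simp; linarith [hW]
  linarith

lemma key_ineq (a b W v1 v2 β : ℝ) (ha : 0 < a) (hb : 0 < b) (hab : a + b = 1)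
    (hv1 : 0 ≤ v1) (hv2 : 0 ≤ v2) (hW : v1 + v2 = W) :
    v1 / a + v2 / b + β ^ 2 * ((a - b) ^ 2 / (a * b)) ≤ (1 / min a b) * (W + β ^ 2) := by
  rcases le_total a b with h | h
  · rw [min_eq_left h]; exact half_ineq a b W v1 v2 β ha hb hab h hv1 hv2 hW
  · rw [min_eq_right h]
    have := half_ineq b a W v2 v1 β hb ha (by linarith) h hv2 hv1 (by linarith)
    calc v1 / a + v2 / b + β ^ 2 * ((a - b) ^ 2 / (a * b))
        = v2 / b + v1 / a + β ^ 2 * ((b - a) ^ 2 / (b * a)) := by ring_nf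
      _ ≤ (1 / b) * (W + β ^ 2) := this

/-- Suboptimal strategy via the top singular vector: the Jacobi-rotated vectors
`x₁, x₂` are orthogonal and the objective value is at most
`(1/min{‖x₁‖², ‖x₂‖²})·((1 − σ₁²)/σ₁² + β²)`. -/
theorem stmt6 {n j r : ℕ}
    (S₁ : Matrix (Fin n) (Fin r) ℂ) (S₂ : Matrix (Fin j) (Fin r) ℂ)
    (hS : S₁ᴴ * S₁ + S₂ᴴ * S₂ = 1)
    (σ₁ : ℝ) (hσ : 0 < σ₁)
    (hmax : ∀ b : Fin r → ℂ,
      (star (S₁.mulVec b) ⬝ᵥ S₁.mulVec b).re ≤ σ₁ ^ 2 * (star b ⬝ᵥ b).re)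
    (v : Fin r → ℂ) (hv : star v ⬝ᵥ v = 1)
    (heig : (S₁ᴴ * S₁).mulVec v = ((σ₁ ^ 2 : ℝ) : ℂ) • v)
    (z : Fin n → ℂ) (hz : z = ((σ₁⁻¹ : ℝ) : ℂ) • S₁.mulVec v)
    (w : Fin j → ℂ) (hw : w = ((σ₁⁻¹ : ℝ) : ℂ) • S₂.mulVec v)
    (xr xi : Fin n → ℝ)
    (hxr : xr = fun i => (z i).re) (hxi : xi = fun i => (z i).im)
    (hind : LinearIndependent ℝ ![xr, xi])
    (c s : ℝ) (hc : c = jacobiC xr xi) (hs : s = jacobiS xr xi)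
    (x₁ x₂ : Fin n → ℝ)
    (hx₁ : x₁ = c • xr - s • xi) (hx₂ : x₂ = s • xr + c • xi)
    (v₁ v₂ : Fin j → ℝ)
    (hv₁ : v₁ = c • (fun i => (w i).re) - s • (fun i => (w i).im))
    (hv₂ : v₂ = s • (fun i => (w i).re) + c • (fun i => (w i).im))
    (δ₁ δ₂ δ : ℝ)
    (hδ₁ : δ₁ = 1 / Real.sqrt (x₁ ⬝ᵥ x₁))
    (hδ₂ : δ₂ = 1 / Real.sqrt (x₂ ⬝ᵥ x₂))
    (hδ : δ = δ₂ / δ₁) :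
    x₁ ⬝ᵥ x₂ = 0 ∧
    ∀ β : ℝ,
      δ₁ ^ 2 * (v₁ ⬝ᵥ v₁) + δ₂ ^ 2 * (v₂ ⬝ᵥ v₂) + β ^ 2 * (δ - 1 / δ) ^ 2 ≤
        (1 / min (x₁ ⬝ᵥ x₁) (x₂ ⬝ᵥ x₂)) * ((1 - σ₁ ^ 2) / σ₁ ^ 2 + β ^ 2) := by
  have hσ2 : (σ₁ : ℝ) ^ 2 ≠ 0 := by positivity
  -- ‖z‖² = 1
  have hSv : star (S₁.mulVec v) ⬝ᵥ S₁.mulVec v = ((σ₁ ^ 2 : ℝ) : ℂ) := by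
    rw [Matrix.star_mulVec, ← Matrix.dotProduct_mulVec, Matrix.mulVec_mulVec, heig,
      dotProduct_smul, hv]
    simp
  have hσc : (σ₁ : ℂ) ≠ 0 := by exact_mod_cast hσ.ne'
  have hzz : star z ⬝ᵥ z = 1 := by
    rw [hz, star_smul, smul_dotProduct, dotProduct_smul, hSv]
    simp only [smul_eq_mul, RCLike.star_def, Complex.conj_ofReal]
    push_cast
    field_simp
  -- ‖w‖² = (1-σ₁²)/σ₁²
  have hS2 : S₂ᴴ * S₂ = 1 - S₁ᴴ * S₁ := by rw [← hS]; abel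
  have hSw : star (S₂.mulVec v) ⬝ᵥ S₂.mulVec v = ((1 - σ₁ ^ 2 : ℝ) : ℂ) := by
    rw [Matrix.star_mulVec, ← Matrix.dotProduct_mulVec, Matrix.mulVec_mulVec, hS2,
      Matrix.sub_mulVec, Matrix.one_mulVec, heig, dotProduct_sub,
      dotProduct_smul, hv]
    simp
  have hww : star w ⬝ᵥ w = (((1 - σ₁ ^ 2) / σ₁ ^ 2 : ℝ) : ℂ) := by
    rw [hw, star_smul, smul_dotProduct, dotProduct_smul, hSw]
    simp only [smul_eq_mul, RCLike.star_def, Complex.conj_ofReal]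
    push_cast
    rw [eq_div_iff (pow_ne_zero 2 hσc)]
    field_simp
  -- real parts
  have hre : xr ⬝ᵥ xr + xi ⬝ᵥ xi = 1 := by
    have : (star z ⬝ᵥ z).re = 1 := by rw [hzz]; simp
    rw [← this]
    subst hxr hxi
    simp only [dotProduct, Pi.star_apply, RCLike.star_def, Complex.re_sum, Complex.mul_re,
      Complex.conj_re, Complex.conj_im, ← Finset.sum_add_distrib]
    exact Finset.sum_congr rfl fun i _ => by ring
  have hwre : (fun i => (w i).re) ⬝ᵥ (fun i => (w i).re)
      + (fun i => (w i).im) ⬝ᵥ (fun i => (w i).im) = (1 - σ₁ ^ 2) / σ₁ ^ 2 := by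
    have h1 : (star w ⬝ᵥ w).re = (1 - σ₁ ^ 2) / σ₁ ^ 2 := by
      rw [hww, Complex.ofReal_re]
    rw [← h1]
    simp only [dotProduct, Pi.star_apply, RCLike.star_def, Complex.re_sum, Complex.mul_re,
      Complex.conj_re, Complex.conj_im, ← Finset.sum_add_distrib]
    exact Finset.sum_congr rfl fun i _ => by ring
  have hcs : c ^ 2 + s ^ 2 = 1 := by rw [hc, hs]; exact jacobiCS_sq xr xi
  -- orthogonality
  have horth : x₁ ⬝ᵥ x₂ = 0 := by rw [hx₁, hx₂, hc, hs]; exact jacobi_orth xr xi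
  -- positivity of a, b
  rw [LinearIndependent.pair_iff] at hind
  have hx1ne : x₁ ≠ 0 := by
    intro h0
    have := hind c (-s) (by rw [neg_smul, ← sub_eq_add_neg, ← hx₁]; exact h0)
    nlinarith [this.1, this.2]
  have hx2ne : x₂ ≠ 0 := by
    intro h0
    have := hind s c (by rw [← hx₂]; exact h0)
    nlinarith [this.1, this.2]
  have ha : 0 < x₁ ⬝ᵥ x₁ :=
    lt_of_le_of_ne (dps_nonneg _) fun h0 => hx1ne (dotProduct_self_eq_zero.mp h0.symm)
  have hb : 0 < x₂ ⬝ᵥ x₂ :=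
    lt_of_le_of_ne (dps_nonneg _) fun h0 => hx2ne (dotProduct_self_eq_zero.mp h0.symm)
  have hab : x₁ ⬝ᵥ x₁ + x₂ ⬝ᵥ x₂ = 1 := by
    rw [hx₁, hx₂, rot_norm c s hcs xr xi, hre]
  have hWsum : v₁ ⬝ᵥ v₁ + v₂ ⬝ᵥ v₂ = (1 - σ₁ ^ 2) / σ₁ ^ 2 := by
    rw [hv₁, hv₂, rot_norm c s hcs _ _, hwre]
  refine ⟨horth, fun β => ?_⟩
  set a := x₁ ⬝ᵥ x₁ with hadef
  set b := x₂ ⬝ᵥ x₂ with hbdef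
  have hsa : Real.sqrt a ^ 2 = a := Real.sq_sqrt ha.le
  have hsb : Real.sqrt b ^ 2 = b := Real.sq_sqrt hb.le
  have hsa0 : Real.sqrt a ≠ 0 := by positivity
  have hsb0 : Real.sqrt b ≠ 0 := by positivity
  have hδ1sq : δ₁ ^ 2 = 1 / a := by rw [hδ₁]; rw [div_pow, one_pow, hsa]
  have hδ2sq : δ₂ ^ 2 = 1 / b := by rw [hδ₂]; rw [div_pow, one_pow, hsb]
  have hδval : δ = Real.sqrt a / Real.sqrt b := by
    rw [hδ, hδ₁, hδ₂]
    field_simp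
  have hδdiff : (δ - 1 / δ) ^ 2 = (a - b) ^ 2 / (a * b) := by
    have h1 : δ - 1 / δ = (a - b) / (Real.sqrt a * Real.sqrt b) := by
      rw [hδval, one_div_div, div_sub_div _ _ hsb0 hsa0, Real.mul_self_sqrt ha.le,
        Real.mul_self_sqrt hb.le, mul_comm (Real.sqrt b)]
    rw [h1, div_pow, mul_pow, hsa, hsb]
  calc δ₁ ^ 2 * (v₁ ⬝ᵥ v₁) + δ₂ ^ 2 * (v₂ ⬝ᵥ v₂) + β ^ 2 * (δ - 1 / δ) ^ 2
      = (v₁ ⬝ᵥ v₁) / a + (v₂ ⬝ᵥ v₂) / b + β ^ 2 * ((a - b) ^ 2 / (a * b)) := by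
        rw [hδ1sq, hδ2sq, hδdiff]; ring
    _ ≤ (1 / min a b) * ((1 - σ₁ ^ 2) / σ₁ ^ 2 + β ^ 2) :=
        key_ineq a b _ _ _ β ha hb hab (dps_nonneg _) (dps_nonneg _) hWsum
end

section
/- Let S₁ ∈ ℂ^{n×r} and S₂ ∈ ℂ^{j×r} satisfy S₁*S₁ + S₂*S₂ = I_r. Let σ₁ ≥ σ₂ > 0 and let v₁, v₂ ∈ ℂ^r be orthonormal vectors with S₁*S₁v₁ = σ₁²v₁ and S₁*S₁v₂ = σ₂²v₂. Set z₁ = S₁v₁/σ₁, z₂ = S₁v₂/σ₂ ∈ ℂ^n and w₁ = S₂v₁/σ₁, w₂ = S₂v₂/σ₂ ∈ ℂ^j. Then there exist real numbers γ₁, γ₂, ζ₁, ζ₂ with γ₁² + γ₂² + ζ₁² + ζ₂² = 1 such that, setting z = (γ₁ + iζ₁)z₁ + (γ₂ + iζ₂)z₂ and w = (γ₁ + iζ₁)w₁ + (γ₂ + iζ₂)w₂, one has Re(z)ᵀIm(z) = 0, ‖Re(z)‖₂ = ‖Im(z)‖₂ = √2/2, and 2‖w‖₂² ≤ 2(1 −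 σ₂²)/σ₂². -/
open Matrix

set_option maxHeartbeats 1000000 in
/-- Suboptimal strategy via the two top singular vectors: there exist coefficients
`γ₁, γ₂, ζ₁, ζ₂` with `γ₁² + γ₂² + ζ₁² + ζ₂² = 1` such that for
`z = (γ₁ + iζ₁)z₁ + (γ₂ + iζ₂)z₂` and `w = (γ₁ + iζ₁)w₁ + (γ₂ + iζ₂)w₂`,
one has `Re(z)ᵀIm(z) = 0`, `‖Re(z)‖ = ‖Im(z)‖ = √2/2`, and `2‖w‖² ≤ 2(1 − σ₂²)/σ₂²`. -/
theorem stmt7 {n j r : ℕ}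
    (S₁ : Matrix (Fin n) (Fin r) ℂ) (S₂ : Matrix (Fin j) (Fin r) ℂ)
    (hS : S₁ᴴ * S₁ + S₂ᴴ * S₂ = 1)
    (σ₁ σ₂ : ℝ) (hσ₁₂ : σ₂ ≤ σ₁) (hσ₂ : 0 < σ₂)
    (v₁ v₂ : Fin r → ℂ)
    (hv₁ : star v₁ ⬝ᵥ v₁ = 1) (hv₂ : star v₂ ⬝ᵥ v₂ = 1) (hv₁₂ : star v₁ ⬝ᵥ v₂ = 0)
    (heig₁ : (S₁ᴴ * S₁).mulVec v₁ = ((σ₁ ^ 2 : ℝ) : ℂ) • v₁)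
    (heig₂ : (S₁ᴴ * S₁).mulVec v₂ = ((σ₂ ^ 2 : ℝ) : ℂ) • v₂)
    (z₁ z₂ : Fin n → ℂ)
    (hz₁ : z₁ = ((σ₁⁻¹ : ℝ) : ℂ) • S₁.mulVec v₁)
    (hz₂ : z₂ = ((σ₂⁻¹ : ℝ) : ℂ) • S₁.mulVec v₂)
    (w₁ w₂ : Fin j → ℂ)
    (hw₁ : w₁ = ((σ₁⁻¹ : ℝ) : ℂ) • S₂.mulVec v₁)
    (hw₂ : w₂ = ((σ₂⁻¹ : ℝ) : ℂ) • S₂.mulVec v₂) :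
    ∃ γ₁ γ₂ ζ₁ ζ₂ : ℝ,
      γ₁ ^ 2 + γ₂ ^ 2 + ζ₁ ^ 2 + ζ₂ ^ 2 = 1 ∧
      ∀ (z : Fin n → ℂ) (w : Fin j → ℂ),
        z = ((γ₁ : ℂ) + ζ₁ * Complex.I) • z₁ + ((γ₂ : ℂ) + ζ₂ * Complex.I) • z₂ →
        w = ((γ₁ : ℂ) + ζ₁ * Complex.I) • w₁ + ((γ₂ : ℂ) + ζ₂ * Complex.I) • w₂ →
        ((fun i => (z i).re) ⬝ᵥ fun i => (z i).im) = 0 ∧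
        Real.sqrt ((fun i => (z i).re) ⬝ᵥ fun i => (z i).re) = Real.sqrt 2 / 2 ∧
        Real.sqrt ((fun i => (z i).im) ⬝ᵥ fun i => (z i).im) = Real.sqrt 2 / 2 ∧
        2 * (star w ⬝ᵥ w).re ≤ 2 * (1 - σ₂ ^ 2) / σ₂ ^ 2 := by
  have hσ₁ : (0:ℝ) < σ₁ := hσ₂.trans_le hσ₁₂
  have hσ₁c : (σ₁:ℂ) ≠ 0 := by exact_mod_cast hσ₁.ne'
  have hσ₂c : (σ₂:ℂ) ≠ 0 := by exact_mod_cast hσ₂.ne'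
  -- general adjoint identity
  have key : ∀ (m : ℕ) (S : Matrix (Fin m) (Fin r) ℂ) (u v : Fin r → ℂ),
      star (S *ᵥ u) ⬝ᵥ (S *ᵥ v) = star u ⬝ᵥ (Sᴴ * S) *ᵥ v := by
    intro m S u v
    rw [Matrix.star_mulVec, Matrix.dotProduct_mulVec, Matrix.dotProduct_mulVec,
      Matrix.vecMul_vecMul]
  have h22 : S₂ᴴ * S₂ = 1 - S₁ᴴ * S₁ := by
    rw [eq_sub_iff_add_eq, add_comm, hS]
  have hv₂₁ : star v₂ ⬝ᵥ v₁ = 0 := by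
    rw [Matrix.star_dotProduct, hv₁₂, star_zero]
  -- orthonormality of z₁, z₂
  have hz11 : star z₁ ⬝ᵥ z₁ = 1 := by
    rw [hz₁, star_smul, smul_dotProduct, dotProduct_smul, key, heig₁,
      dotProduct_smul, hv₁]
    simp only [smul_eq_mul, Complex.star_def, Complex.conj_ofReal, mul_one]
    push_cast
    field_simp
    all_goals first | (left; ring) | ring
  have hz22 : star z₂ ⬝ᵥ z₂ = 1 := by
    rw [hz₂, star_smul, smul_dotProduct, dotProduct_smul, key, heig₂,
      dotProduct_smul, hv₂]
    simp only [smul_eq_mul, Complex.star_def, Complex.conj_ofReal, mul_one]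
    push_cast
    field_simp
    all_goals first | (left; ring) | ring
  have hz12 : star z₁ ⬝ᵥ z₂ = 0 := by
    rw [hz₁, hz₂, star_smul, smul_dotProduct, dotProduct_smul, key, heig₂,
      dotProduct_smul, hv₁₂]
    simp
  have hz21 : star z₂ ⬝ᵥ z₁ = 0 := by
    rw [Matrix.star_dotProduct, hz12, star_zero]
  -- w dot products
  have hw11 : star w₁ ⬝ᵥ w₁ = (((1 - σ₁^2)/σ₁^2 : ℝ) : ℂ) := by
    rw [hw₁, star_smul, smul_dotProduct, dotProduct_smul, key, h22,
      Matrix.sub_mulVec, dotProduct_sub, Matrix.one_mulVec, heig₁,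
      dotProduct_smul, hv₁]
    simp only [smul_eq_mul, Complex.star_def, Complex.conj_ofReal, mul_one]
    push_cast
    field_simp
    all_goals first | (left; ring) | ring
  have hw22 : star w₂ ⬝ᵥ w₂ = (((1 - σ₂^2)/σ₂^2 : ℝ) : ℂ) := by
    rw [hw₂, star_smul, smul_dotProduct, dotProduct_smul, key, h22,
      Matrix.sub_mulVec, dotProduct_sub, Matrix.one_mulVec, heig₂,
      dotProduct_smul, hv₂]
    simp only [smul_eq_mul, Complex.star_def, Complex.conj_ofReal, mul_one]
    push_cast
    field_simp
    all_goals first | (left; ring) | ring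
  have hw12 : star w₁ ⬝ᵥ w₂ = 0 := by
    rw [hw₁, hw₂, star_smul, smul_dotProduct, dotProduct_smul, key, h22,
      Matrix.sub_mulVec, dotProduct_sub, Matrix.one_mulVec, heig₂,
      dotProduct_smul, hv₁₂]
    simp
  have hw21 : star w₂ ⬝ᵥ w₁ = 0 := by
    rw [Matrix.star_dotProduct, hw12, star_zero]
  -- a root of the quadratic form
  set p : ℂ := z₁ ⬝ᵥ z₁ with hp
  set q : ℂ := z₁ ⬝ᵥ z₂ with hq
  set s : ℂ := z₂ ⬝ᵥ z₂ with hs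
  have hqc : z₂ ⬝ᵥ z₁ = q := by rw [hq]; exact dotProduct_comm z₂ z₁
  obtain ⟨a, b, hab0, hroot⟩ :
      ∃ a b : ℂ, 0 < Complex.normSq a + Complex.normSq b ∧
        p * a^2 + 2*(q*(a*b)) + s*b^2 = 0 := by
    by_cases hp0 : p = 0
    · exact ⟨1, 0, by simp, by simp [hp0]⟩
    · obtain ⟨c, hc⟩ := IsAlgClosed.exists_pow_nat_eq (k := ℂ) (q^2 - p*s) (n := 2)
        (by norm_num)
      refine ⟨-q + c, p, ?_, by linear_combination p * hc⟩
      nlinarith [Complex.normSq_nonneg (-q + c), Complex.normSq_pos.2 hp0]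
  set m : ℝ := Complex.normSq a + Complex.normSq b with hm
  have hmpos : 0 < m := hab0
  set N : ℝ := Real.sqrt m with hN
  have hNpos : 0 < N := Real.sqrt_pos.2 hmpos
  set A : ℂ := a / (N:ℂ) with hA
  set B : ℂ := b / (N:ℂ) with hB
  have hNN : Complex.normSq ((N:ℝ):ℂ) = m := by
    rw [Complex.normSq_ofReal, hN]
    exact Real.mul_self_sqrt hmpos.le
  have hnorm : Complex.normSq A + Complex.normSq B = 1 := by
    rw [hA, hB, Complex.normSq_div, Complex.normSq_div, hNN, ← add_div,
      ← hm, div_self hmpos.ne']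
  refine ⟨A.re, B.re, A.im, B.im, ?_, ?_⟩
  · have h := hnorm
    simp only [Complex.normSq_apply] at h
    linear_combination h
  intro z w hz hw
  rw [Complex.re_add_im, Complex.re_add_im] at hz hw
  -- z ⬝ z = 0
  have hzz : z ⬝ᵥ z = 0 := by
    rw [hz]
    simp only [add_dotProduct, dotProduct_add, smul_dotProduct,
      dotProduct_smul, smul_eq_mul, ← hp, ← hq, ← hs, hqc]
    rw [hA, hB]
    linear_combination (((N:ℝ):ℂ)^2)⁻¹ * hroot
  -- star z ⬝ z = 1
  have hsz : star z ⬝ᵥ z = 1 := by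
    rw [hz, star_add, star_smul, star_smul]
    simp only [add_dotProduct, dotProduct_add, smul_dotProduct,
      dotProduct_smul, smul_eq_mul, hz11, hz22, hz12, hz21, mul_zero, mul_one,
      add_zero, zero_add, Complex.star_def]
    rw [Complex.mul_conj, Complex.mul_conj, ← Complex.ofReal_add, hnorm,
      Complex.ofReal_one]
  -- re/im identities
  have hRI : ((fun i => (z i).re) ⬝ᵥ fun i => (z i).im) = (z ⬝ᵥ z).im / 2 := by
    simp only [dotProduct, Complex.im_sum, Complex.mul_im]
    rw [Finset.sum_div]
    exact Finset.sum_congr rfl fun i _ => by ring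
  have hRR : ((fun i => (z i).re) ⬝ᵥ fun i => (z i).re)
      = ((star z ⬝ᵥ z).re + (z ⬝ᵥ z).re) / 2 := by
    simp only [dotProduct, Complex.re_sum, Complex.mul_re, Pi.star_apply,
      Complex.star_def, Complex.conj_re, Complex.conj_im]
    rw [← Finset.sum_add_distrib, Finset.sum_div]
    exact Finset.sum_congr rfl fun i _ => by ring
  have hII : ((fun i => (z i).im) ⬝ᵥ fun i => (z i).im)
      = ((star z ⬝ᵥ z).re - (z ⬝ᵥ z).re) / 2 := by
    simp only [dotProduct, Complex.re_sum, Complex.mul_re, Pi.star_apply,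
      Complex.star_def, Complex.conj_re, Complex.conj_im]
    rw [← Finset.sum_sub_distrib, Finset.sum_div]
    exact Finset.sum_congr rfl fun i _ => by ring
  have hhalf : Real.sqrt (1/2 : ℝ) = Real.sqrt 2 / 2 := by
    rw [show (1/2:ℝ) = (Real.sqrt 2 / 2)^2 by
      rw [div_pow, Real.sq_sqrt (by norm_num : (0:ℝ) ≤ 2)]; norm_num]
    exact Real.sqrt_sq (by positivity)
  refine ⟨?_, ?_, ?_, ?_⟩
  · rw [hRI, hzz]; simp
  · rw [hRR, hsz, hzz]; norm_num [hhalf]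
  · rw [hII, hsz, hzz]; norm_num [hhalf]
  · -- w bound
    have hσsq : σ₂^2 ≤ σ₁^2 := by nlinarith
    have hWle : (1 - σ₁^2)/σ₁^2 ≤ (1 - σ₂^2)/σ₂^2 := by
      rw [div_le_div_iff₀ (by positivity) (by positivity)]
      nlinarith [hσsq]
    have hwwc : star w ⬝ᵥ w
        = ((Complex.normSq A * ((1 - σ₁^2)/σ₁^2)
          + Complex.normSq B * ((1 - σ₂^2)/σ₂^2) : ℝ) : ℂ) := by
      rw [hw, star_add, star_smul, star_smul]
      simp only [add_dotProduct, dotProduct_add, smul_dotProduct,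
        dotProduct_smul, smul_eq_mul, hw11, hw22, hw12, hw21, mul_zero,
        add_zero, zero_add, Complex.star_def]
      rw [Complex.ofReal_add, Complex.ofReal_mul, Complex.ofReal_mul]
      linear_combination (((1 - σ₁^2)/σ₁^2 : ℝ) : ℂ) * Complex.mul_conj A
        + (((1 - σ₂^2)/σ₂^2 : ℝ) : ℂ) * Complex.mul_conj B
    rw [hwwc, Complex.ofReal_re, mul_div_assoc]
    have hA0 : (0:ℝ) ≤ Complex.normSq A := Complex.normSq_nonneg A
    have hB0 : (0:ℝ) ≤ Complex.normSq B := Complex.normSq_nonneg B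
    have h3 : (Complex.normSq A + Complex.normSq B) * ((1 - σ₂^2)/σ₂^2)
        = (1 - σ₂^2)/σ₂^2 := by rw [hnorm, one_mul]
    linarith [mul_le_mul_of_nonneg_left hWle hA0, h3]
end

section
/- Let φ₁ ≥ φ₂ ≥ 0 with φ₁ > 0, and let ν₂ ∈ ℝ satisfy ν₂² ≤ φ₁/(φ₁ + φ₂). Define μ₁ = −√(φ₂/φ₁)·ν₂, μ₂ = √(φ₁/(φ₁+φ₂) − ν₂²), and ν₁ = √(φ₂/(φ₁+φ₂) − (φ₂/φ₁)ν₂²). Then (μ₁, μ₂, ν₁, ν₂) satisfies the system: φ₁μ₁ν₁ + φ₂μ₂ν₂ = 0, φ₁(μ₁² − ν₁²) + φ₂(μ₂² − ν₂²) = 0, and μ₁² + μ₂² + ν₁² + ν₂² = 1. -/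
/-- The explicit quadruple `(μ₁, μ₂, ν₁, ν₂)` solves the system
`φ₁μ₁ν₁ + φ₂μ₂ν₂ = 0`, `φ₁(μ₁² − ν₁²) + φ₂(μ₂² − ν₂²) = 0`, `μ₁² + μ₂² + ν₁² + ν₂² = 1`. -/
theorem stmt8 (φ₁ φ₂ ν₂ : ℝ) (h21 : φ₂ ≤ φ₁) (h2 : 0 ≤ φ₂) (h1 : 0 < φ₁)
    (hν₂ : ν₂ ^ 2 ≤ φ₁ / (φ₁ + φ₂))
    (μ₁ μ₂ ν₁ : ℝ)
    (hμ₁ : μ₁ = -Real.sqrt (φ₂ / φ₁) * ν₂)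
    (hμ₂ : μ₂ = Real.sqrt (φ₁ / (φ₁ + φ₂) - ν₂ ^ 2))
    (hν₁ : ν₁ = Real.sqrt (φ₂ / (φ₁ + φ₂) - (φ₂ / φ₁) * ν₂ ^ 2)) :
    φ₁ * μ₁ * ν₁ + φ₂ * μ₂ * ν₂ = 0 ∧
    φ₁ * (μ₁ ^ 2 - ν₁ ^ 2) + φ₂ * (μ₂ ^ 2 - ν₂ ^ 2) = 0 ∧
    μ₁ ^ 2 + μ₂ ^ 2 + ν₁ ^ 2 + ν₂ ^ 2 = 1 := by
  have h1' : (0:ℝ) < φ₁ + φ₂ := by linarith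
  have ha : (0:ℝ) ≤ φ₁ / (φ₁ + φ₂) - ν₂ ^ 2 := by linarith
  have hr : (0:ℝ) ≤ φ₂ / φ₁ := div_nonneg h2 h1.le
  have heq : φ₂ / (φ₁ + φ₂) - (φ₂ / φ₁) * ν₂ ^ 2
      = (φ₂ / φ₁) * (φ₁ / (φ₁ + φ₂) - ν₂ ^ 2) := by
    field_simp
  have hν₁' : ν₁ = Real.sqrt (φ₂ / φ₁) * μ₂ := by
    rw [hν₁, hμ₂, heq, Real.sqrt_mul hr]
  have hμ₂sq : μ₂ ^ 2 = φ₁ / (φ₁ + φ₂) - ν₂ ^ 2 := by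
    rw [hμ₂, Real.sq_sqrt ha]
  have hrsq : Real.sqrt (φ₂ / φ₁) ^ 2 = φ₂ / φ₁ := Real.sq_sqrt hr
  have hs2 : Real.sqrt (φ₂ / φ₁) ^ 2 * φ₁ = φ₂ := by
    rw [hrsq]; field_simp
  refine ⟨?_, ?_, ?_⟩
  · rw [hμ₁, hν₁']
    linear_combination (-(ν₂ * μ₂)) * hs2
  · rw [hμ₁, hν₁']
    linear_combination (ν₂ ^ 2 - μ₂ ^ 2) * hs2
  · rw [hμ₁, hν₁']
    have hsum : μ₂ ^ 2 + ν₂ ^ 2 = φ₁ / (φ₁ + φ₂) := by linarith [hμ₂sq]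
    have hkey : φ₂ / φ₁ * (φ₁ / (φ₁ + φ₂)) + φ₁ / (φ₁ + φ₂) = 1 := by
      field_simp
      ring
    linear_combination (ν₂ ^ 2 + μ₂ ^ 2) * hrsq + (φ₂ / φ₁ + 1) * hsum + hkey
end

section
/- Let A ∈ ℝ^{n×n} and B ∈ ℝ^{n×m}, and suppose B = Q₁R where Q = [Q₁, Q₂] ∈ ℝ^{n×n} is orthogonal with Q₁ ∈ ℝ^{n×m}, Q₂ ∈ ℝ^{n×(n−m)}, and R ∈ ℝ^{m×m} is invertible. Let X ∈ ℝ^{n×n} be orthogonal and T ∈ ℝ^{n×n}. Then for any F ∈ ℝ^{m×n}, the equality A + BF = X T Xᵀ holds if and only if Q₂ᵀ(AX − XT) = 0 and F = R⁻¹Q₁ᵀ(X T Xᵀ − A). -/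
open Matrix

/-- Parametrization of solutions to the pole assignment problem via the real Schur form:
with `B = Q₁R`, `Q = [Q₁, Q₂]` orthogonal and `R` invertible, and `X` orthogonal,
`A + BF = XTXᵀ` holds iff `Q₂ᵀ(AX − XT) = 0` and `F = R⁻¹Q₁ᵀ(XTXᵀ − A)`. -/
theorem stmt9 {n m k : ℕ} (hmk : m + k = n)
    (A : Matrix (Fin n) (Fin n) ℝ) (B : Matrix (Fin n) (Fin m) ℝ)
    (Q₁ : Matrix (Fin n) (Fin m) ℝ) (Q₂ : Matrix (Fin n) (Fin k) ℝ)
    (hQ : (Matrix.fromCols Q₁ Q₂)ᵀ * Matrix.fromCols Q₁ Q₂ = 1)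
    (hQ' : Matrix.fromCols Q₁ Q₂ * (Matrix.fromCols Q₁ Q₂)ᵀ = 1)
    (R : Matrix (Fin m) (Fin m) ℝ) (hR : IsUnit R.det)
    (hB : B = Q₁ * R)
    (X T : Matrix (Fin n) (Fin n) ℝ) (hX : Xᵀ * X = 1) :
    ∀ F : Matrix (Fin m) (Fin n) ℝ,
      A + B * F = X * T * Xᵀ ↔
        (Q₂ᵀ * (A * X - X * T) = 0 ∧ F = R⁻¹ * (Q₁ᵀ * (X * T * Xᵀ - A))) := by
  have hXX : X * Xᵀ = 1 := mul_eq_one_comm.mp hX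
  have hsum : Q₁ * Q₁ᵀ + Q₂ * Q₂ᵀ = 1 := by
    rw [transpose_fromCols, fromCols_mul_fromRows] at hQ'; exact hQ'
  rw [transpose_fromCols, fromRows_mul_fromCols, ← fromBlocks_one] at hQ
  obtain ⟨h11, h12, h21, h22⟩ := fromBlocks_inj.mp hQ
  intro F
  constructor
  · intro h
    have hD : X * T * Xᵀ - A = B * F := by rw [← h]; abel
    have key1 : Q₁ᵀ * (X * T * Xᵀ - A) = R * F := by
      rw [hD, hB, Matrix.mul_assoc Q₁ R F, ← Matrix.mul_assoc Q₁ᵀ Q₁ (R * F), h11, Matrix.one_mul]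
    have key2 : Q₂ᵀ * (X * T * Xᵀ - A) = 0 := by
      rw [hD, hB, Matrix.mul_assoc Q₁ R F, ← Matrix.mul_assoc Q₂ᵀ Q₁ (R * F), h21, Matrix.zero_mul]
    constructor
    · have h' := congrArg (· * X) key2
      simp only [Matrix.zero_mul] at h'
      simp only [Matrix.sub_mul, Matrix.mul_sub, Matrix.mul_assoc, hX, Matrix.mul_one] at h'
      simp only [Matrix.mul_sub, Matrix.mul_assoc]
      exact sub_eq_zero.mpr (sub_eq_zero.mp h').symm
    · rw [key1, ← Matrix.mul_assoc R⁻¹ R F, nonsing_inv_mul R hR, Matrix.one_mul]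
  · rintro ⟨h1, hF⟩
    have h2 : Q₂ᵀ * (X * T * Xᵀ - A) = 0 := by
      have h' := congrArg (· * Xᵀ) h1
      simp only [Matrix.zero_mul] at h'
      simp only [Matrix.sub_mul, Matrix.mul_sub, Matrix.mul_assoc, hXX, Matrix.mul_one] at h'
      simp only [Matrix.mul_sub, Matrix.mul_assoc]
      exact sub_eq_zero.mpr (sub_eq_zero.mp h').symm
    have hz : Q₁ * Q₁ᵀ * (X * T * Xᵀ - A) = X * T * Xᵀ - A := by
      have hs := congrArg (· * (X * T * Xᵀ - A)) hsum
      simp only [Matrix.one_mul, add_mul] at hs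
      rw [Matrix.mul_assoc Q₂ Q₂ᵀ _, h2, Matrix.mul_zero, add_zero] at hs
      exact hs
    rw [hB, hF, Matrix.mul_assoc Q₁ R _, ← Matrix.mul_assoc R R⁻¹ _, mul_nonsing_inv R hR,
      Matrix.one_mul, ← Matrix.mul_assoc Q₁ Q₁ᵀ _, hz]
    abel
end

section
/- Let z ∈ ℂ^n, w ∈ ℂ^j, β ∈ ℝ, and let c, s ∈ ℝ satisfy c² + s² = 1. Define x₁ = c·Re(z) − s·Im(z), x₂ = s·Re(z) + c·Im(z), v₁ = c·Re(w) − s·Im(w), v₂ = s·Re(w) + c·Im(w), and assume x₁ ≠ 0 and x₂ ≠ 0. Let δ₁ = 1/‖x₁‖₂, δ₂ = 1/‖x₂‖₂, and C = ‖z‖₂/‖x₁‖₂. Then δ₁²‖v₁‖₂² + δ₂²‖v₂‖₂² + β²(δ₁/δ₂ − δ₂/δ₁)² = (C²/(C²−1))·‖w‖₂²/‖z‖₂² + ((C⁴ − 2C²)/(C²−1))·‖v₁‖₂²/‖z‖₂² + β²(C² − 3 + 1/(C²−1)). -/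
open Matrix

/-- The objective value `δ₁²‖v₁‖² + δ₂²‖v₂‖² + β²(δ₁/δ₂ − δ₂/δ₁)²` of the rotated data
equals `(C²/(C²−1))‖w‖²/‖z‖² + ((C⁴−2C²)/(C²−1))‖v₁‖²/‖z‖² + β²(C² − 3 + 1/(C²−1))`,
where `C = ‖z‖/‖x₁‖`. -/
theorem stmt15 {n j : ℕ} (z : Fin n → ℂ) (w : Fin j → ℂ) (β c s : ℝ)
    (hcs : c ^ 2 + s ^ 2 = 1)
    (x₁ x₂ : Fin n → ℝ)
    (hx₁ : x₁ = c • (fun i => (z i).re) - s • (fun i => (z i).im))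
    (hx₂ : x₂ = s • (fun i => (z i).re) + c • (fun i => (z i).im))
    (v₁ v₂ : Fin j → ℝ)
    (hv₁ : v₁ = c • (fun i => (w i).re) - s • (fun i => (w i).im))
    (hv₂ : v₂ = s • (fun i => (w i).re) + c • (fun i => (w i).im))
    (hx₁0 : x₁ ≠ 0) (hx₂0 : x₂ ≠ 0)
    (δ₁ δ₂ C : ℝ)
    (hδ₁ : δ₁ = 1 / Real.sqrt (x₁ ⬝ᵥ x₁))
    (hδ₂ : δ₂ = 1 / Real.sqrt (x₂ ⬝ᵥ x₂))
    (hC : C = Real.sqrt ((star z ⬝ᵥ z).re) / Real.sqrt (x₁ ⬝ᵥ x₁)) :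
    δ₁ ^ 2 * (v₁ ⬝ᵥ v₁) + δ₂ ^ 2 * (v₂ ⬝ᵥ v₂) + β ^ 2 * (δ₁ / δ₂ - δ₂ / δ₁) ^ 2 =
      (C ^ 2 / (C ^ 2 - 1)) * ((star w ⬝ᵥ w).re / (star z ⬝ᵥ z).re) +
      ((C ^ 4 - 2 * C ^ 2) / (C ^ 2 - 1)) * ((v₁ ⬝ᵥ v₁) / (star z ⬝ᵥ z).re) +
      β ^ 2 * (C ^ 2 - 3 + 1 / (C ^ 2 - 1)) := by
  have key : ∀ (m : ℕ) (u : Fin m → ℂ) (y₁ y₂ : Fin m → ℝ),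
      y₁ = c • (fun i => (u i).re) - s • (fun i => (u i).im) →
      y₂ = s • (fun i => (u i).re) + c • (fun i => (u i).im) →
      (star u ⬝ᵥ u).re = y₁ ⬝ᵥ y₁ + y₂ ⬝ᵥ y₂ := by
    intro m u y₁ y₂ h1 h2
    subst h1 h2
    simp only [dotProduct, Pi.sub_apply, Pi.add_apply, Pi.smul_apply, smul_eq_mul,
      Pi.star_apply, Complex.re_sum, ← Finset.sum_add_distrib]
    refine Finset.sum_congr rfl fun i _ => ?_
    have : (star (u i) * u i).re = (u i).re ^ 2 + (u i).im ^ 2 := by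
      simp [Complex.mul_re, Complex.star_def]; ring
    rw [this]; nlinarith [hcs]
  set a := x₁ ⬝ᵥ x₁ with ha'
  set b := x₂ ⬝ᵥ x₂ with hb'
  have ha : 0 < a := by
    rcases (Function.ne_iff.mp hx₁0) with ⟨i, hi⟩
    refine Finset.sum_pos' (fun k _ => mul_self_nonneg _) ⟨i, Finset.mem_univ i, mul_self_pos.mpr hi⟩
  have hb : 0 < b := by
    rcases (Function.ne_iff.mp hx₂0) with ⟨i, hi⟩
    refine Finset.sum_pos' (fun k _ => mul_self_nonneg _) ⟨i, Finset.mem_univ i, mul_self_pos.mpr hi⟩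
  have hz : (star z ⬝ᵥ z).re = a + b := key n z x₁ x₂ hx₁ hx₂
  have hw : (star w ⬝ᵥ w).re = v₁ ⬝ᵥ v₁ + v₂ ⬝ᵥ v₂ := key j w v₁ v₂ hv₁ hv₂
  have hsa : Real.sqrt a > 0 := Real.sqrt_pos.mpr ha
  have hsb : Real.sqrt b > 0 := Real.sqrt_pos.mpr hb
  have hsa2 : Real.sqrt a ^ 2 = a := Real.sq_sqrt ha.le
  have hsb2 : Real.sqrt b ^ 2 = b := Real.sq_sqrt hb.le
  have hC2 : C ^ 2 = (a + b) / a := by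
    rw [hC, hz, div_pow, Real.sq_sqrt (by linarith), hsa2]
  have hC2m1 : C ^ 2 - 1 = b / a := by
    rw [hC2]; field_simp; ring
  have hd1 : δ₁ ^ 2 = 1 / a := by rw [hδ₁, div_pow, hsa2, one_pow]
  have hd2 : δ₂ ^ 2 = 1 / b := by rw [hδ₂, div_pow, hsb2, one_pow]
  have hratio : (δ₁ / δ₂ - δ₂ / δ₁) ^ 2 = b / a + a / b - 2 := by
    have h : (δ₁ / δ₂ - δ₂ / δ₁) ^ 2 = δ₁ ^ 2 / δ₂ ^ 2 + δ₂ ^ 2 / δ₁ ^ 2 - 2 := by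
      have hδ₁0 : δ₁ ≠ 0 := by rw [hδ₁]; positivity
      have hδ₂0 : δ₂ ≠ 0 := by rw [hδ₂]; positivity
      field_simp
      ring
    rw [h, hd1, hd2]
    field_simp
  have hC4 : C ^ 4 = ((a + b) / a) ^ 2 := by rw [show (4:ℕ) = 2*2 from rfl, pow_mul, hC2]
  rw [hz, hw, hd1, hd2, hratio, hC2m1, hC4, hC2]
  have ha0 : a ≠ 0 := ha.ne'
  have hb0 : b ≠ 0 := hb.ne'
  field_simp
  ring
end

section
/- Let A ∈ ℝ^{n×n} and B ∈ ℝ^{n×m} be such that the controllability matrix [B, AB, A²B, …, A^{n−1}B] ∈ ℝ^{n×nm} has rank n. Let Q₂ ∈ ℝ^{n×(n−m)} satisfy Q₂ᵀQ₂ = I_{n−m} and Q₂ᵀB = 0. Then for every λ ∈ ℂ, the matrix Q₂ᵀ(A − λI_n) ∈ ℂ^{(n−m)×n} has full row rank n − m. -/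
open Matrix

lemma vecMul_smulMat {n m : ℕ} (w : Fin n → ℂ) (a : ℂ) (M : Matrix (Fin n) (Fin m) ℂ) :
    w ᵥ* (a • M) = a • (w ᵥ* M) := by
  ext j
  simp [vecMul, dotProduct, Finset.mul_sum]
  congr 1; ext i; ring

lemma vecMul_eq_sum' {ι κ : Type*} [Fintype ι] {K : Type*} [CommRing K] (v : ι → K)
    (M : Matrix ι κ K) : v ᵥ* M = ∑ i, v i • M i := by
  ext j
  simp [vecMul, dotProduct]

/-- PBH-type consequence of controllability: if the controllability matrix
`[B, AB, …, A^{n−1}B]` has rank `n`, and `Q₂` has orthonormal columns with `Q₂ᵀB = 0`,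
then `Q₂ᵀ(A − λI)` has full row rank `n − m` for every `λ ∈ ℂ`. -/
theorem stmt18 {n m : ℕ} (hm : m ≤ n)
    (A : Matrix (Fin n) (Fin n) ℝ) (B : Matrix (Fin n) (Fin m) ℝ)
    (hctrb : (Matrix.of fun (i : Fin n) (q : Fin n × Fin m) =>
      (A ^ (q.1 : ℕ) * B) i q.2).rank = n)
    (Q₂ : Matrix (Fin n) (Fin (n - m)) ℝ)
    (hQ₂ : Q₂ᵀ * Q₂ = 1) (hQB : Q₂ᵀ * B = 0) :
    ∀ lam : ℂ,
      ((Q₂.map Complex.ofReal)ᵀ *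
        (A.map Complex.ofReal - lam • (1 : Matrix (Fin n) (Fin n) ℂ))).rank = n - m := by
  intro lam
  classical
  set C : Matrix (Fin n) (Fin n × Fin m) ℝ :=
    Matrix.of fun (i : Fin n) (q : Fin n × Fin m) => (A ^ (q.1 : ℕ) * B) i q.2 with hC
  -- rows of C are linearly independent
  have hCli : LinearIndependent ℝ (fun i : Fin n => C i) := by
    rw [linearIndependent_iff_card_eq_finrank_span]
    have := C.rank_eq_finrank_span_row
    rw [hctrb] at this
    rw [Fintype.card_fin, Set.finrank,
      show (Set.range fun i => C i) = Set.range C from rfl]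
    exact this
  -- hence left multiplication kills only zero
  have hCinj : ∀ x : Fin n → ℝ, x ᵥ* C = 0 → x = 0 := by
    intro x hx
    have := (Fintype.linearIndependent_iff.mp hCli) x (by rw [← vecMul_eq_sum', hx])
    funext i; exact this i
  set Ac := A.map Complex.ofReal with hAc
  set Bc := B.map Complex.ofReal with hBc
  set Qc := Q₂.map Complex.ofReal with hQc
  set M := Qcᵀ * (Ac - lam • (1 : Matrix (Fin n) (Fin n) ℂ)) with hM
  have hmapmul : ∀ {p q r : ℕ} (X : Matrix (Fin p) (Fin q) ℝ) (Y : Matrix (Fin q) (Fin r) ℝ),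
      (X * Y).map Complex.ofReal = X.map Complex.ofReal * Y.map Complex.ofReal := by
    intro p q r X Y
    ext i j
    simp [Matrix.mul_apply, Matrix.map_apply]
  have hmappow : ∀ (k : ℕ), (A ^ k).map Complex.ofReal = Ac ^ k := by
    intro k
    induction k with
    | zero => simp [Matrix.map_one]
    | succ k ih => rw [pow_succ, hmapmul, ih, pow_succ]
  -- show rows of M are linearly independent
  have hMli : LinearIndependent ℂ (fun i : Fin (n - m) => M i) := by
    rw [Fintype.linearIndependent_iff]
    intro v hv
    have hv' : v ᵥ* M = 0 := by rw [vecMul_eq_sum']; exact hv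
    set w : Fin n → ℂ := v ᵥ* Qcᵀ with hw
    have hwA : w ᵥ* Ac = lam • w := by
      have : w ᵥ* (Ac - lam • (1 : Matrix (Fin n) (Fin n) ℂ)) = 0 := by
        rw [hw, vecMul_vecMul, ← hM, hv']
      rw [Matrix.vecMul_sub, sub_eq_zero] at this
      rw [this, vecMul_smulMat, vecMul_one]
    have hwpow : ∀ k : ℕ, w ᵥ* (Ac ^ k) = lam ^ k • w := by
      intro k
      induction k with
      | zero => simp [vecMul_one]
      | succ k ih =>
        rw [pow_succ, ← vecMul_vecMul, ih, smul_vecMul, hwA, smul_smul, ← pow_succ]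
    have hwB : w ᵥ* Bc = 0 := by
      have hQBc : Qcᵀ * Bc = 0 := by
        rw [hQc, hBc, ← Matrix.transpose_map, ← hmapmul, hQB]
        simp
      rw [hw, vecMul_vecMul, hQBc, vecMul_zero]
    -- w kills the complex controllability matrix
    have hwC : ∀ q : Fin n × Fin m, (w ᵥ* (C.map Complex.ofReal)) q = 0 := by
      intro q
      have key : ∀ i, ((C i q : ℝ) : ℂ) = (Ac ^ (q.1 : ℕ) * Bc) i q.2 := by
        intro i
        rw [← hmappow, ← hmapmul]
        simp [hC, Matrix.map_apply]
      have h1 : (w ᵥ* (C.map Complex.ofReal)) q = (w ᵥ* (Ac ^ (q.1 : ℕ) * Bc)) q.2 := by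
        simp only [vecMul, dotProduct, Matrix.map_apply]
        exact Finset.sum_congr rfl fun i _ => by rw [key i]
      rw [h1, ← vecMul_vecMul, hwpow, smul_vecMul, hwB]
      simp
    -- split into real and imaginary parts
    have hre : (fun i => (w i).re) ᵥ* C = 0 := by
      funext q
      have := hwC q
      simp only [vecMul, dotProduct, Matrix.map_apply] at this ⊢
      have h2 : (∑ i, w i * (C i q : ℂ)).re = 0 := by rw [this, Complex.zero_re]
      rw [Complex.re_sum] at h2
      simpa [Complex.mul_re] using h2
    have him : (fun i => (w i).im) ᵥ* C = 0 := by
      funext q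
      have := hwC q
      simp only [vecMul, dotProduct, Matrix.map_apply] at this ⊢
      have h2 : (∑ i, w i * (C i q : ℂ)).im = 0 := by rw [this, Complex.zero_im]
      rw [Complex.im_sum] at h2
      simpa [Complex.mul_im] using h2
    have hre0 := hCinj _ hre
    have him0 := hCinj _ him
    have hw0 : w = 0 := by
      funext i
      apply Complex.ext
      · exact congrFun hre0 i
      · exact congrFun him0 i
    -- recover v = 0
    have hQQc : Qcᵀ * Qc = 1 := by
      rw [hQc, ← Matrix.transpose_map, ← hmapmul, hQ₂]
      exact Matrix.map_one _ (by simp) (by simp)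
    have : v ᵥ* (Qcᵀ * Qc) = 0 := by
      rw [← vecMul_vecMul, ← hw, hw0, zero_vecMul]
    rw [hQQc, vecMul_one] at this
    intro i; exact congrFun this i
  have := hMli.rank_matrix
  simpa [Fintype.card_fin] using this
end
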